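/- A Banach space B with a Schauder basis (x_i) is reflexive if and only if (x_i) is both boundedly complete and shrinking. -/

import Mathlib

open Filter

/-- `x` is a Schauder basis of `B`: every vector has a unique expansion whose partial sums
converge to it. -/
def IsSchauderBasis {B : Type*} [NormedAddCommGroup B] [NormedSpace ℝ B] (x : ℕ → B) : Prop :=
  ∀ y : B, ∃! a : ℕ → ℝ,
    Tendsto (fun N => ∑ i ∈ Finset.range N, a i • x i) atTop (nhds y)

/-- The basis `x` is boundedly complete. -/
def BoundedlyComplete {B : Type*} [NormedAddCommGroup B] [NormedSpace ℝ B] (x : ℕ → B) : Prop :=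
  ∀ a : ℕ → ℝ, (∃ M : ℝ, ∀ N, ‖∑ i ∈ Finset.range N, a i • x i‖ ≤ M) →
    ∃ y : B, Tendsto (fun N => ∑ i ∈ Finset.range N, a i • x i) atTop (nhds y)

/-- The basis `x` is shrinking: the norms of the restrictions of any `f ∈ B*` to the spans of
the tails `{x i : i ≥ n}` tend to `0`. -/
def Shrinking {B : Type*} [NormedAddCommGroup B] [NormedSpace ℝ B] (x : ℕ → B) : Prop :=
  ∀ f : B →L[ℝ] ℝ, ∀ ε > (0:ℝ), ∃ N : ℕ, ∀ n ≥ N,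
    ∀ v ∈ Submodule.span ℝ (x '' {i | n ≤ i}), ‖v‖ ≤ 1 → |f v| ≤ ε

noncomputable section
variable {B : Type*} [NormedAddCommGroup B] [NormedSpace ℝ B]

/-- Partial sums of basis expansion. -/
def pS (x : ℕ → B) (a : ℕ → ℝ) (N : ℕ) : B := ∑ i ∈ Finset.range N, a i • x i

lemma pS_add (x : ℕ → B) (a b : ℕ → ℝ) (N : ℕ) : pS x (a + b) N = pS x a N + pS x b N := by
  simp [pS, add_smul, Finset.sum_add_distrib]

lemma pS_smul (x : ℕ → B) (c : ℝ) (a : ℕ → ℝ) (N : ℕ) : pS x (c • a) N = c • pS x a N := by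
  simp [pS, Finset.smul_sum, smul_smul]

lemma pS_neg (x : ℕ → B) (a : ℕ → ℝ) (N : ℕ) : pS x (-a) N = -pS x a N := by
  simp [pS, Finset.sum_neg_distrib]

lemma pS_sub (x : ℕ → B) (a b : ℕ → ℝ) (N : ℕ) : pS x (a - b) N = pS x a N - pS x b N := by
  simp [pS, sub_smul, Finset.sum_sub_distrib]

lemma pS_zero (x : ℕ → B) (N : ℕ) : pS x (0 : ℕ → ℝ) N = 0 := by simp [pS]

lemma pS_succ_sub (x : ℕ → B) (a : ℕ → ℝ) (N : ℕ) :
    pS x a (N + 1) - pS x a N = a N • x N := by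
  simp [pS, Finset.sum_range_succ]

def IsSchauderBasis' (x : ℕ → B) : Prop :=
  ∀ y : B, ∃! a : ℕ → ℝ,
    Tendsto (fun N => ∑ i ∈ Finset.range N, a i • x i) atTop (nhds y)

section coeff
variable {x : ℕ → B} (hx : IsSchauderBasis' x)
include hx

lemma isB_def (y : B) : ∃! a : ℕ → ℝ, Tendsto (pS x a) atTop (nhds y) := hx y

/-- The coefficient sequence of `y`. -/
def coeffFn (y : B) : ℕ → ℝ := (hx y).choose

lemma coeff_tendsto (y : B) : Tendsto (pS x (coeffFn hx y)) atTop (nhds y) :=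
  (hx y).choose_spec.1

lemma coeff_unique {y : B} {a : ℕ → ℝ} (h : Tendsto (pS x a) atTop (nhds y)) :
    a = coeffFn hx y :=
  ((hx y).choose_spec.2 a h)

lemma coeff_zero : coeffFn hx 0 = 0 := by
  symm
  refine coeff_unique hx ?_
  rw [show pS x (0 : ℕ → ℝ) = fun _ => (0:B) from funext (pS_zero x)]
  exact tendsto_const_nhds

lemma basis_ne_zero (i : ℕ) : x i ≠ 0 := by
  intro h0
  have h1 : Tendsto (pS x (fun j => if j = i then (1:ℝ) else 0)) atTop (nhds 0) := by
    have : ∀ N, pS x (fun j => if j = i then (1:ℝ) else 0) N = 0 := by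
      intro N
      unfold pS
      rw [Finset.sum_eq_zero]
      intro j hj
      by_cases hji : j = i <;> simp [hji, h0]
    rw [show pS x (fun j => if j = i then (1:ℝ) else 0) = fun _ => (0:B) from funext this]
    exact tendsto_const_nhds
  have h2 := coeff_unique hx h1
  have h3 := coeff_zero hx
  have : (fun j => if j = i then (1:ℝ) else 0) = (0 : ℕ → ℝ) := by
    rw [h2, ← h3]
  simpa using congrFun this i


lemma coeff_add (y z : B) : coeffFn hx (y + z) = coeffFn hx y + coeffFn hx z := by
  symm
  refine coeff_unique hx ?_
  have : Tendsto (fun N => pS x (coeffFn hx y) N + pS x (coeffFn hx z) N) atTop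
      (nhds (y + z)) := (coeff_tendsto hx y).add (coeff_tendsto hx z)
  rw [show pS x (coeffFn hx y + coeffFn hx z)
      = fun N => pS x (coeffFn hx y) N + pS x (coeffFn hx z) N from funext (pS_add x _ _)]
  exact this

lemma coeff_smul (c : ℝ) (y : B) : coeffFn hx (c • y) = c • coeffFn hx y := by
  symm
  refine coeff_unique hx ?_
  have : Tendsto (fun N => c • pS x (coeffFn hx y) N) atTop (nhds (c • y)) :=
    (coeff_tendsto hx y).const_smul c
  rw [show pS x (c • coeffFn hx y) = fun N => c • pS x (coeffFn hx y) N
      from funext (pS_smul x _ _)]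
  exact this

lemma coeff_basis (j : ℕ) : coeffFn hx (x j) = fun i => if i = j then 1 else 0 := by
  symm
  refine coeff_unique hx ?_
  have hev : ∀ N, j < N → pS x (fun i => if i = j then (1:ℝ) else 0) N = x j := by
    intro N hN
    unfold pS
    rw [Finset.sum_eq_single j]
    · simp
    · intro b _ hb; simp [hb]
    · intro h; exact absurd (Finset.mem_range.2 hN) h
  have : ∀ᶠ N in atTop, pS x (fun i => if i = j then (1:ℝ) else 0) N = x j :=
    eventually_atTop.2 ⟨j + 1, fun N hN => hev N (Nat.lt_of_succ_le hN)⟩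
  exact Tendsto.congr' (this.mono fun N h => h.symm) tendsto_const_nhds

end coeff

/-! ### The sequence space with sup-of-partial-sums norm -/

variable (x : ℕ → B)

/-- Sequences whose partial sums w.r.t. `x` converge. -/
structure ESp : Type _ where
  a : ℕ → ℝ
  conv : ∃ y : B, Tendsto (pS x a) atTop (nhds y)

namespace ESp

variable {x}

@[ext] lemma ext' {e f : ESp x} (h : e.a = f.a) : e = f := by
  cases e; cases f; simpa using h

instance : Zero (ESp x) := ⟨⟨0, ⟨0, by
  rw [show pS x (0 : ℕ → ℝ) = fun _ => (0:B) from funext (pS_zero x)]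
  exact tendsto_const_nhds⟩⟩⟩

instance : Add (ESp x) := ⟨fun e f => ⟨e.a + f.a, by
  obtain ⟨y, hy⟩ := e.conv; obtain ⟨z, hz⟩ := f.conv
  exact ⟨y + z, by
    rw [show pS x (e.a + f.a) = fun N => pS x e.a N + pS x f.a N from funext (pS_add x _ _)]
    exact hy.add hz⟩⟩⟩

instance : Neg (ESp x) := ⟨fun e => ⟨-e.a, by
  obtain ⟨y, hy⟩ := e.conv
  exact ⟨-y, by
    rw [show pS x (-e.a) = fun N => -pS x e.a N from funext (pS_neg x _)]
    exact hy.neg⟩⟩⟩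

instance : SMul ℝ (ESp x) := ⟨fun c e => ⟨c • e.a, by
  obtain ⟨y, hy⟩ := e.conv
  exact ⟨c • y, by
    rw [show pS x (c • e.a) = fun N => c • pS x e.a N from funext (pS_smul x _ _)]
    exact hy.const_smul c⟩⟩⟩

@[simp] lemma zero_a : (0 : ESp x).a = 0 := rfl
@[simp] lemma add_a (e f : ESp x) : (e + f).a = e.a + f.a := rfl
@[simp] lemma neg_a (e : ESp x) : (-e).a = -e.a := rfl
@[simp] lemma smul_a (c : ℝ) (e : ESp x) : (c • e).a = c • e.a := rfl

instance : AddCommGroup (ESp x) where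
  add_assoc e f g := by ext1; simp [add_assoc]
  zero_add e := by ext1; simp
  add_zero e := by ext1; simp
  neg_add_cancel e := by ext1; simp
  add_comm e f := by ext1; simp [add_comm]
  nsmul := nsmulRec
  zsmul := zsmulRec

instance : Module ℝ (ESp x) where
  one_smul e := by ext1; simp
  mul_smul c d e := by ext1; simp [mul_smul]
  smul_zero c := by ext1; simp
  smul_add c e f := by ext1; simp [smul_add]
  add_smul c d e := by ext1; simp [add_smul]
  zero_smul e := by ext1; simp

end ESp

namespace ESp
variable {x : ℕ → B}

/-- The candidate norm. -/
noncomputable def en (e : ESp x) : ℝ := ⨆ N, ‖pS x e.a N‖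

lemma bdd (e : ESp x) : BddAbove (Set.range fun N => ‖pS x e.a N‖) := by
  obtain ⟨y, hy⟩ := e.conv
  exact (hy.norm).bddAbove_range

lemma pS_le_en (e : ESp x) (N : ℕ) : ‖pS x e.a N‖ ≤ e.en :=
  le_ciSup e.bdd N

lemma en_nonneg (e : ESp x) : 0 ≤ e.en :=
  le_trans (norm_nonneg _) (e.pS_le_en 0)

lemma en_le (e : ESp x) {M : ℝ} (h : ∀ N, ‖pS x e.a N‖ ≤ M) : e.en ≤ M :=
  ciSup_le h

variable (x) in
/-- Norm structure; needs all basis vectors nonzero for definiteness. -/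
noncomputable def gn (h0 : ∀ i, x i ≠ 0) : AddGroupNorm (ESp x) where
  toFun := en
  map_zero' := by
    have : ∀ N, ‖pS x (0 : ESp x).a N‖ = 0 := by simp [pS_zero]
    simp only [en, this, ciSup_const]
  add_le' e f := by
    refine ciSup_le fun N => ?_
    rw [show (e + f).a = e.a + f.a from rfl, pS_add]
    exact (norm_add_le _ _).trans (add_le_add (e.pS_le_en N) (f.pS_le_en N))
  neg' e := by
    simp only [en, neg_a, pS_neg, norm_neg]
  eq_zero_of_map_eq_zero' e he := by
    have hN : ∀ N, pS x e.a N = 0 := by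
      intro N
      have h1 : ‖pS x e.a N‖ ≤ 0 := he ▸ e.pS_le_en N
      simpa using le_antisymm h1 (norm_nonneg _)
    ext1; funext i
    have : e.a i • x i = 0 := by
      rw [← pS_succ_sub x e.a i, hN, hN, sub_zero]
    rcases smul_eq_zero.1 this with h | h
    · exact h
    · exact absurd h (h0 i)

noncomputable instance [hf : Fact (∀ i, x i ≠ 0)] : NormedAddCommGroup (ESp x) :=
  AddGroupNorm.toNormedAddCommGroup (gn x hf.out)

lemma norm_def [hf : Fact (∀ i, x i ≠ 0)] (e : ESp x) : ‖e‖ = e.en := rfl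

noncomputable instance [hf : Fact (∀ i, x i ≠ 0)] : NormedSpace ℝ (ESp x) where
  norm_smul_le c e := by
    rw [norm_def, norm_def]
    refine ciSup_le fun N => ?_
    rw [show (c • e).a = c • e.a from rfl, pS_smul, norm_smul]
    exact mul_le_mul_of_nonneg_left (e.pS_le_en N) (norm_nonneg c)

end ESp

namespace ESp
variable {x : ℕ → B}

lemma coord_mul_le (e : ESp x) (i : ℕ) : |e.a i| * ‖x i‖ ≤ 2 * e.en := by
  have h1 : e.a i • x i = pS x e.a (i + 1) - pS x e.a i := (pS_succ_sub x e.a i).symm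
  have h2 : ‖e.a i • x i‖ ≤ 2 * e.en := by
    rw [h1]
    calc ‖pS x e.a (i+1) - pS x e.a i‖ ≤ ‖pS x e.a (i+1)‖ + ‖pS x e.a i‖ := norm_sub_le _ _
    _ ≤ e.en + e.en := add_le_add (e.pS_le_en _) (e.pS_le_en _)
    _ = 2 * e.en := by ring
  simpa [norm_smul, Real.norm_eq_abs] using h2

noncomputable instance instComplete [CompleteSpace B] [hf : Fact (∀ i, x i ≠ 0)] : CompleteSpace (ESp x) := by
  apply Metric.complete_of_cauchySeq_tendsto
  intro u hu
  -- coordinates are Cauchy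
  have hcoord : ∀ i : ℕ, CauchySeq (fun k => (u k).a i) := by
    intro i
    rw [Metric.cauchySeq_iff]
    intro ε hε
    have hxi : (0:ℝ) < ‖x i‖ := norm_pos_iff.2 (hf.out i)
    rcases Metric.cauchySeq_iff.1 hu (ε * ‖x i‖ / 2) (by positivity) with ⟨K, hK⟩
    refine ⟨K, fun m hm n hn => ?_⟩
    have h1 : |(u m - u n).a i| * ‖x i‖ ≤ 2 * (u m - u n).en := coord_mul_le _ i
    have h2 : (u m - u n).en = dist (u m) (u n) := (dist_eq_norm (u m) (u n)).symm
    have h3 : dist (u m) (u n) < ε * ‖x i‖ / 2 := hK m hm n hn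
    have h4 : |(u m).a i - (u n).a i| * ‖x i‖ < ε * ‖x i‖ := by
      have he : (u m - u n).a i = (u m).a i - (u n).a i := rfl
      rw [he] at h1
      linarith
    rw [Real.dist_eq]
    exact lt_of_mul_lt_mul_right (by linarith) hxi.le
  have hlim : ∀ i : ℕ, ∃ c : ℝ, Tendsto (fun k => (u k).a i) atTop (nhds c) := fun i =>
    cauchySeq_tendsto_of_complete (hcoord i)
  choose b hb using hlim
  -- partial sums converge coordinatewise
  have hpS : ∀ N : ℕ, Tendsto (fun k => pS x (u k).a N) atTop (nhds (pS x b N)) := by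
    intro N
    unfold pS
    exact tendsto_finset_sum _ fun i _ => (hb i).smul_const (x i)
  -- uniform estimate
  have key : ∀ ε : ℝ, 0 < ε → ∃ K : ℕ, ∀ k ≥ K, ∀ N, ‖pS x (u k).a N - pS x b N‖ ≤ ε := by
    intro ε hε
    rcases Metric.cauchySeq_iff.1 hu ε hε with ⟨K, hK⟩
    refine ⟨K, fun k hk N => ?_⟩
    have h5 : ∀ l ≥ K, ‖pS x (u k).a N - pS x (u l).a N‖ ≤ ε := by
      intro l hl
      have : pS x (u k).a N - pS x (u l).a N = pS x ((u k - u l).a) N := by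
        rw [show (u k - u l).a = (u k).a - (u l).a from rfl, pS_sub]
      rw [this]
      calc ‖pS x ((u k - u l).a) N‖ ≤ (u k - u l).en := pS_le_en _ N
      _ = ‖u k - u l‖ := rfl
      _ = dist (u k) (u l) := (dist_eq_norm _ _).symm
      _ ≤ ε := (hK k hk l hl).le
    have h6 : Tendsto (fun l => ‖pS x (u k).a N - pS x (u l).a N‖) atTop
        (nhds ‖pS x (u k).a N - pS x b N‖) := (tendsto_const_nhds.sub (hpS N)).norm
    exact le_of_tendsto h6 (eventually_atTop.2 ⟨K, h5⟩)
  -- b has convergent partial sums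
  have hbconv : ∃ y : B, Tendsto (pS x b) atTop (nhds y) := by
    apply cauchySeq_tendsto_of_complete
    rw [Metric.cauchySeq_iff]
    intro ε hε
    rcases key (ε/4) (by positivity) with ⟨K, hK⟩
    obtain ⟨yK, hyK⟩ := (u K).conv
    rcases Metric.cauchySeq_iff.1 hyK.cauchySeq (ε/4) (by positivity) with ⟨M, hM⟩
    refine ⟨M, fun m hm n hn => ?_⟩
    have e1 := hK K le_rfl m
    have e2 := hK K le_rfl n
    have e3 := hM m hm n hn
    rw [dist_eq_norm] at e3 ⊢
    calc ‖pS x b m - pS x b n‖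
        ≤ ‖pS x b m - pS x (u K).a m‖ + ‖pS x (u K).a m - pS x (u K).a n‖
          + ‖pS x (u K).a n - pS x b n‖ := by
          have := norm_add₃_le (a := pS x b m - pS x (u K).a m)
            (b := pS x (u K).a m - pS x (u K).a n) (c := pS x (u K).a n - pS x b n)
          simpa using this
    _ < ε := by
        rw [norm_sub_rev (pS x b m)] at *
        linarith
  -- assemble the limit point
  refine ⟨⟨b, hbconv⟩, ?_⟩
  rw [Metric.tendsto_atTop]
  intro ε hε
  rcases key (ε/2) (by positivity) with ⟨K, hK⟩
  refine ⟨K, fun k hk => ?_⟩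
  rw [dist_eq_norm]
  have : ‖u k - ⟨b, hbconv⟩‖ = (u k - ⟨b, hbconv⟩).en := rfl
  rw [this]
  have h7 : (u k - ⟨b, hbconv⟩).en ≤ ε/2 := by
    refine en_le _ fun N => ?_
    have : (u k - (⟨b, hbconv⟩ : ESp x)).a = (u k).a - b := rfl
    rw [this, pS_sub]
    exact hK k hk N
  linarith

end ESp

namespace ESp
variable {x : ℕ → B} [CompleteSpace B]

noncomputable def elim (e : ESp x) : B := e.conv.choose

omit [CompleteSpace B] in
lemma tendsto_elim (e : ESp x) : Tendsto (pS x e.a) atTop (nhds e.elim) := e.conv.choose_spec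

lemma elim_add (e f : ESp x) : (e + f).elim = e.elim + f.elim := by
  refine tendsto_nhds_unique (tendsto_elim (e + f)) ?_
  rw [show pS x (e + f).a = fun N => pS x e.a N + pS x f.a N from funext (pS_add x _ _)]
  exact (tendsto_elim e).add (tendsto_elim f)

lemma elim_smul (c : ℝ) (e : ESp x) : (c • e).elim = c • e.elim := by
  refine tendsto_nhds_unique (tendsto_elim (c • e)) ?_
  rw [show pS x (c • e).a = fun N => c • pS x e.a N from funext (pS_smul x _ _)]
  exact (tendsto_elim e).const_smul c

/-- The summation operator as a continuous linear map. -/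
noncomputable def T [Fact (∀ i, x i ≠ 0)] : ESp x →L[ℝ] B :=
  LinearMap.mkContinuous
    { toFun := elim
      map_add' := elim_add
      map_smul' := elim_smul }
    1 (fun e => by
      rw [one_mul]
      refine le_of_tendsto (tendsto_elim e).norm (Eventually.of_forall fun N => ?_)
      exact e.pS_le_en N)

lemma T_apply [Fact (∀ i, x i ≠ 0)] (e : ESp x) : T e = e.elim := rfl

end ESp

/-- The key uniform bound on partial sum operators (basis constant). -/
lemma exists_basisConst {x : ℕ → B} [CompleteSpace B] (hx : IsSchauderBasis' x) :
    ∃ K : ℝ, 1 ≤ K ∧ ∀ (y : B) (N : ℕ), ‖pS x (coeffFn hx y) N‖ ≤ K * ‖y‖ := by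
  haveI : Fact (∀ i, x i ≠ 0) := ⟨basis_ne_zero hx⟩
  have hinj : (ESp.T : ESp x →L[ℝ] B).ker = ⊥ := by
    refine LinearMap.ker_eq_bot.mpr ?_
    intro e f hef
    have h1 : e.a = coeffFn hx (ESp.T e) := coeff_unique hx (ESp.tendsto_elim e)
    have h2 : f.a = coeffFn hx (ESp.T f) := coeff_unique hx (ESp.tendsto_elim f)
    ext1
    rw [h1, h2]
    exact congrArg (coeffFn hx) hef
  have hsurj : (ESp.T : ESp x →L[ℝ] B).range = ⊤ := by
    refine LinearMap.range_eq_top.mpr ?_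
    intro y
    refine ⟨⟨coeffFn hx y, ⟨y, coeff_tendsto hx y⟩⟩, ?_⟩
    exact tendsto_nhds_unique (ESp.tendsto_elim _) (coeff_tendsto hx y)
  let eq := ContinuousLinearEquiv.ofBijective (ESp.T : ESp x →L[ℝ] B) hinj hsurj
  set C := ‖(eq.symm : B →L[ℝ] ESp x)‖ with hC
  refine ⟨max C 1, le_max_right _ _, fun y N => ?_⟩
  have hTy : ESp.T (eq.symm y) = y := by
    have := eq.apply_symm_apply y
    rwa [show ∀ z, eq z = ESp.T z from fun z => rfl] at this
  have h1 : (eq.symm y : ESp x).a = coeffFn hx y := by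
    have h := coeff_unique hx (ESp.tendsto_elim (eq.symm y))
    exact h.trans (congrArg (coeffFn hx) hTy)
  calc ‖pS x (coeffFn hx y) N‖ = ‖pS x (eq.symm y).a N‖ := by rw [h1]
  _ ≤ (eq.symm y).en := ESp.pS_le_en _ N
  _ = ‖eq.symm y‖ := rfl
  _ ≤ C * ‖y‖ := (eq.symm : B →L[ℝ] ESp x).le_opNorm y
  _ ≤ max C 1 * ‖y‖ := by
      have := le_max_left C 1
      exact mul_le_mul_of_nonneg_right this (norm_nonneg y)

section ops
variable {x : ℕ → B} (hx : IsSchauderBasis' x) {K : ℝ}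
  (hK : ∀ (y : B) (N : ℕ), ‖pS x (coeffFn hx y) N‖ ≤ K * ‖y‖)

/-- Partial sum operators. -/
noncomputable def SN (n : ℕ) : B →L[ℝ] B :=
  LinearMap.mkContinuous
    { toFun := fun y => pS x (coeffFn hx y) n
      map_add' := fun y z => by
        show pS x (coeffFn hx (y + z)) n = pS x (coeffFn hx y) n + pS x (coeffFn hx z) n
        rw [coeff_add hx, pS_add]
      map_smul' := fun c y => by
        show pS x (coeffFn hx (c • y)) n = c • pS x (coeffFn hx y) n
        rw [coeff_smul hx, pS_smul] }
    K (fun y => hK y n)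

lemma SN_apply (n : ℕ) (y : B) : SN hx hK n y = pS x (coeffFn hx y) n := rfl

lemma SN_tendsto (y : B) : Tendsto (fun n => SN hx hK n y) atTop (nhds y) :=
  coeff_tendsto hx y

lemma SN_norm_le (hK0 : 0 ≤ K) (n : ℕ) : ‖SN hx hK n‖ ≤ K :=
  LinearMap.mkContinuous_norm_le _ hK0 _

/-- Coefficient functionals. -/
noncomputable def fCo (i : ℕ) : B →L[ℝ] ℝ :=
  LinearMap.mkContinuous
    { toFun := fun y => coeffFn hx y i
      map_add' := fun y z => by
        show coeffFn hx (y + z) i = coeffFn hx y i + coeffFn hx z i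
        rw [coeff_add hx]; rfl
      map_smul' := fun c y => by
        show coeffFn hx (c • y) i = c * coeffFn hx y i
        rw [coeff_smul hx]; rfl }
    (2 * K / ‖x i‖) (fun y => by
      have hxi : (0:ℝ) < ‖x i‖ := norm_pos_iff.2 (basis_ne_zero hx i)
      have h1 : ‖coeffFn hx y i • x i‖ ≤ 2 * (K * ‖y‖) := by
        rw [← pS_succ_sub x (coeffFn hx y) i]
        calc ‖pS x (coeffFn hx y) (i+1) - pS x (coeffFn hx y) i‖
            ≤ ‖pS x (coeffFn hx y) (i+1)‖ + ‖pS x (coeffFn hx y) i‖ := norm_sub_le _ _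
        _ ≤ K * ‖y‖ + K * ‖y‖ := add_le_add (hK y _) (hK y _)
        _ = 2 * (K * ‖y‖) := by ring
      rw [norm_smul, Real.norm_eq_abs] at h1
      rw [Real.norm_eq_abs, div_mul_eq_mul_div, le_div_iff₀ hxi]
      calc |coeffFn hx y i| * ‖x i‖ ≤ 2 * (K * ‖y‖) := h1
      _ = 2 * K * ‖y‖ := by ring)

lemma fCo_apply (i : ℕ) (y : B) : fCo hx hK i y = coeffFn hx y i := rfl

lemma fCo_basis (i j : ℕ) : fCo hx hK i (x j) = if i = j then 1 else 0 := by
  rw [fCo_apply, coeff_basis hx]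

lemma fCo_eq_zero_of_mem_tail {i n : ℕ} (hin : i < n) {v : B}
    (hv : v ∈ Submodule.span ℝ (x '' {j | n ≤ j})) : fCo hx hK i v = 0 := by
  have hle : Submodule.span ℝ (x '' {j | n ≤ j}) ≤ LinearMap.ker (fCo hx hK i).toLinearMap := by
    rw [Submodule.span_le]
    rintro - ⟨j, hj, rfl⟩
    have hij : i ≠ j := fun h => absurd (h ▸ hj) (by simpa using hin.not_ge)
    simp only [SetLike.mem_coe, LinearMap.mem_ker]
    show fCo hx hK i (x j) = 0
    rw [fCo_basis]
    simp [hij]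
  exact hle hv

lemma sub_SN_mem_closure (n : ℕ) (y : B) :
    y - SN hx hK n y ∈ closure (Submodule.span ℝ (x '' {j | n ≤ j}) : Set B) := by
  have h1 : Tendsto (fun M => pS x (coeffFn hx y) M - pS x (coeffFn hx y) n) atTop
      (nhds (y - SN hx hK n y)) := (coeff_tendsto hx y).sub tendsto_const_nhds
  have h2 : ∀ᶠ M in atTop, pS x (coeffFn hx y) M - pS x (coeffFn hx y) n
      ∈ (Submodule.span ℝ (x '' {j | n ≤ j}) : Set B) := by
    refine eventually_atTop.2 ⟨n, fun M hM => ?_⟩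
    have : pS x (coeffFn hx y) M - pS x (coeffFn hx y) n
        = ∑ i ∈ Finset.Ico n M, coeffFn hx y i • x i := by
      unfold pS
      rw [← Finset.sum_Ico_eq_sub _ hM]
    rw [this]
    refine Submodule.sum_mem _ fun i hi => Submodule.smul_mem _ _ ?_
    exact Submodule.subset_span ⟨i, (Finset.mem_Ico.1 hi).1, rfl⟩
  exact mem_closure_of_tendsto h1 h2

lemma eq_zero_of_coeff_eq_zero {y : B} (h : ∀ i, coeffFn hx y i = 0) : y = 0 := by
  have h1 : Tendsto (pS x (coeffFn hx y)) atTop (nhds y) := coeff_tendsto hx y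
  have h2 : pS x (coeffFn hx y) = fun _ => (0:B) := by
    funext N
    unfold pS
    exact Finset.sum_eq_zero fun i _ => by rw [h i, zero_smul]
  rw [h2] at h1
  exact tendsto_nhds_unique h1 tendsto_const_nhds

end ops

def Shrinking' (x : ℕ → B) : Prop :=
  ∀ f : B →L[ℝ] ℝ, ∀ ε > (0:ℝ), ∃ N : ℕ, ∀ n ≥ N,
    ∀ v ∈ Submodule.span ℝ (x '' {i | n ≤ i}), ‖v‖ ≤ 1 → |f v| ≤ ε

def BoundedlyComplete' (x : ℕ → B) : Prop :=
  ∀ a : ℕ → ℝ, (∃ M : ℝ, ∀ N, ‖∑ i ∈ Finset.range N, a i • x i‖ ≤ M) →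
    ∃ y : B, Tendsto (fun N => ∑ i ∈ Finset.range N, a i • x i) atTop (nhds y)

lemma shrink_bound {x : ℕ → B} (hs : Shrinking' x) (g : B →L[ℝ] ℝ) {ε : ℝ} (hε : 0 < ε) :
    ∃ N : ℕ, ∀ n ≥ N, ∀ w ∈ closure (Submodule.span ℝ (x '' {j | n ≤ j}) : Set B),
      |g w| ≤ ε * ‖w‖ := by
  obtain ⟨N, hN⟩ := hs g ε hε
  refine ⟨N, fun n hn w hw => ?_⟩
  have hspan : ∀ v ∈ Submodule.span ℝ (x '' {j | n ≤ j}), |g v| ≤ ε * ‖v‖ := by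
    intro v hv
    rcases eq_or_ne v 0 with rfl | hv0
    · simp
    · have hnv : (0:ℝ) < ‖v‖ := norm_pos_iff.2 hv0
      have h1 : ‖v‖⁻¹ • v ∈ Submodule.span ℝ (x '' {j | n ≤ j}) :=
        Submodule.smul_mem _ _ hv
      have h2 : ‖‖v‖⁻¹ • v‖ ≤ 1 := by
        rw [norm_smul, norm_inv, norm_norm, inv_mul_cancel₀ hnv.ne']
      have h3 := hN n hn _ h1 h2
      rw [map_smul, smul_eq_mul, abs_mul, abs_inv, abs_norm] at h3
      calc |g v| = ‖v‖ * (‖v‖⁻¹ * |g v|) := by field_simp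
      _ ≤ ‖v‖ * ε := mul_le_mul_of_nonneg_left h3 hnv.le
      _ = ε * ‖v‖ := mul_comm _ _
  have hcl : IsClosed {w : B | |g w| ≤ ε * ‖w‖} := by
    have hc1 : Continuous fun w : B => |g w| := by
      simpa [Real.norm_eq_abs] using g.continuous.norm
    exact isClosed_le hc1 (continuous_const.mul continuous_norm)
  exact closure_minimal hspan hcl hw

section ops2
variable {x : ℕ → B} (hx : IsSchauderBasis' x) {K : ℝ}
  (hK : ∀ (y : B) (N : ℕ), ‖pS x (coeffFn hx y) N‖ ≤ K * ‖y‖)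

/-- Dual partial sums converge to the functional, for a shrinking basis. -/
lemma gSN_tendsto (hK0 : 0 ≤ K) (hs : Shrinking' x) (g : B →L[ℝ] ℝ) :
    Tendsto (fun n => g.comp (SN hx hK n)) atTop (nhds g) := by
  rw [Metric.tendsto_atTop]
  intro ε hε
  have hd : (0:ℝ) < ε / (2 * (1 + K)) := by positivity
  obtain ⟨N, hN⟩ := shrink_bound hs g hd
  refine ⟨N, fun n hn => ?_⟩
  rw [dist_eq_norm]
  have hb : ‖g.comp (SN hx hK n) - g‖ ≤ ε / (2 * (1 + K)) * (1 + K) := by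
    refine ContinuousLinearMap.opNorm_le_bound _ (by positivity) fun v => ?_
    have h1 : (g.comp (SN hx hK n) - g) v = -(g (v - SN hx hK n v)) := by
      simp [map_sub]
    rw [h1, norm_neg]
    have h2 := hN n hn _ (sub_SN_mem_closure hx hK n v)
    rw [Real.norm_eq_abs]
    refine h2.trans ?_
    have h3 : ‖v - SN hx hK n v‖ ≤ (1 + K) * ‖v‖ := by
      calc ‖v - SN hx hK n v‖ ≤ ‖v‖ + ‖SN hx hK n v‖ := norm_sub_le _ _
      _ ≤ ‖v‖ + K * ‖v‖ := by
          have := (SN hx hK n).le_opNorm v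
          have h4 := SN_norm_le hx hK hK0 n
          nlinarith [norm_nonneg v]
      _ = (1 + K) * ‖v‖ := by ring
    calc ε / (2 * (1 + K)) * ‖v - SN hx hK n v‖
        ≤ ε / (2 * (1 + K)) * ((1 + K) * ‖v‖) := by
          exact mul_le_mul_of_nonneg_left h3 hd.le
    _ = ε / (2 * (1 + K)) * (1 + K) * ‖v‖ := by ring
  have : ε / (2 * (1 + K)) * (1 + K) = ε / 2 := by
    field_simp
  rw [this] at hb
  linarith

/-- Composition with partial sums expressed through coefficient functionals. -/
lemma g_pS_eq (g : B →L[ℝ] ℝ) (a : ℕ → ℝ) (n : ℕ) :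
    g (pS x a n) = ∑ i ∈ Finset.range n, a i * g (x i) := by
  unfold pS
  rw [map_sum]
  exact Finset.sum_congr rfl fun i _ => by rw [map_smul]; rfl

lemma fCo_pS (a : ℕ → ℝ) {i n : ℕ} (hin : i < n) : fCo hx hK i (pS x a n) = a i := by
  rw [g_pS_eq]
  rw [Finset.sum_eq_single i]
  · rw [fCo_basis]; simp
  · intro j _ hj
    rw [fCo_basis]
    simp [Ne.symm hj]
  · intro h
    exact absurd (Finset.mem_range.2 hin) h

lemma sum_g_fCo (g : B →L[ℝ] ℝ) (n : ℕ) :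
    (∑ i ∈ Finset.range n, g (x i) • fCo hx hK i) = g.comp (SN hx hK n) := by
  ext v
  rw [ContinuousLinearMap.comp_apply, SN_apply, g_pS_eq]
  have : (∑ i ∈ Finset.range n, g (x i) • fCo hx hK i) v
      = ∑ i ∈ Finset.range n, g (x i) * fCo hx hK i v := by
    rw [ContinuousLinearMap.sum_apply]
    exact Finset.sum_congr rfl fun i _ => rfl
  rw [this]
  exact Finset.sum_congr rfl fun i _ => by rw [fCo_apply, mul_comm]

end ops2

/-- Cluster point uniqueness. -/
lemma mapClusterPt_eq {α X : Type*} [TopologicalSpace X] [T2Space X] {l : Filter α} [l.NeBot]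
    {u : α → X} {c r : X} (h : MapClusterPt c l u) (h' : Tendsto u l (nhds r)) : c = r := by
  have h1 : NeBot (nhds c ⊓ map u l) := h
  have h2 : nhds c ⊓ map u l ≤ nhds c ⊓ nhds r := inf_le_inf_left _ h'
  exact eq_of_nhds_neBot (h1.mono h2)

lemma mapClusterPt_mem_closed {α : Type*} {l : Filter α} [l.NeBot] {u : α → ℝ} {c : ℝ}
    {s : Set ℝ} (hs : IsClosed s) (h : MapClusterPt c l u) (hu : ∀ n, u n ∈ s) : c ∈ s := by
  have h1 : ClusterPt c (map u l) := h
  have h2 : map u l ≤ Filter.principal s := by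
    rw [le_principal_iff]
    exact mem_map.2 (Eventually.of_forall hu)
  have := h1.mono h2
  exact hs.closure_eq ▸ mem_closure_iff_clusterPt.2 this

section main
variable {x : ℕ → B} [CompleteSpace B]

lemma surj_of_bc_shrinking (hx : IsSchauderBasis' x)
    (hbc : BoundedlyComplete' x) (hs : Shrinking' x) :
    Function.Surjective (NormedSpace.inclusionInDoubleDual ℝ B) := by
  obtain ⟨K, hK1, hK⟩ := exists_basisConst hx
  have hK0 : (0:ℝ) ≤ K := le_trans zero_le_one hK1
  intro F
  set a : ℕ → ℝ := fun i => F (fCo hx hK i) with ha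
  have h1 : ∀ (g : B →L[ℝ] ℝ) (n : ℕ), g (pS x a n) = F (g.comp (SN hx hK n)) := by
    intro g n
    rw [g_pS_eq, ← sum_g_fCo hx hK g n, map_sum]
    refine Finset.sum_congr rfl fun i _ => ?_
    rw [map_smul, smul_eq_mul, mul_comm]
  have hbd : ∀ n, ‖pS x a n‖ ≤ K * ‖F‖ := by
    intro n
    refine NormedSpace.norm_le_dual_bound ℝ _ (by positivity) fun g => ?_
    rw [h1 g n, Real.norm_eq_abs]
    calc |F (g.comp (SN hx hK n))| ≤ ‖F‖ * ‖g.comp (SN hx hK n)‖ := F.le_opNorm _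
    _ ≤ ‖F‖ * (‖g‖ * ‖SN hx hK n‖) :=
        mul_le_mul_of_nonneg_left (ContinuousLinearMap.opNorm_comp_le _ _) (norm_nonneg F)
    _ ≤ ‖F‖ * (‖g‖ * K) := by
        gcongr
        exact SN_norm_le hx hK hK0 n
    _ = K * ‖F‖ * ‖g‖ := by ring
  obtain ⟨y, hy⟩ := hbc a ⟨K * ‖F‖, fun N => hbd N⟩
  refine ⟨y, ?_⟩
  ext g
  have hgy : Tendsto (fun n => g (pS x a n)) atTop (nhds (g y)) :=
    (g.continuous.tendsto y).comp hy
  have h3 : Tendsto (fun n => F (g.comp (SN hx hK n))) atTop (nhds (F g)) :=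
    (F.continuous.tendsto g).comp (gSN_tendsto hx hK hK0 hs g)
  rw [show (fun n => g (pS x a n)) = fun n => F (g.comp (SN hx hK n))
      from funext fun n => h1 g n] at hgy
  exact (tendsto_nhds_unique hgy h3).symm ▸ (NormedSpace.dual_def ℝ B y g)

end main

section main2
variable {x : ℕ → B} [CompleteSpace B]

set_option maxHeartbeats 1000000 in
lemma exists_weak_cluster (hsurj : Function.Surjective (NormedSpace.inclusionInDoubleDual ℝ B))
    (z : ℕ → B) {M : ℝ} (hz : ∀ n, ‖z n‖ ≤ M) :
    ∃ y : B, ∀ g : B →L[ℝ] ℝ, MapClusterPt (g y) atTop (fun n => g (z n)) := by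
  set u : ℕ → WeakDual ℝ (StrongDual ℝ B) := fun n =>
    StrongDual.toWeakDual (NormedSpace.inclusionInDoubleDual ℝ B (z n)) with hu
  have hub : Filter.map u atTop
      ≤ Filter.principal (WeakDual.toStrongDual ⁻¹' Metric.closedBall 0 M) := by
    rw [le_principal_iff]
    refine mem_map.2 (Eventually.of_forall fun n => ?_)
    show WeakDual.toStrongDual (u n) ∈ Metric.closedBall 0 M
    rw [Metric.mem_closedBall]
    refine (dist_zero_right (WeakDual.toStrongDual (u n) : StrongDual ℝ (StrongDual ℝ B))).trans_le ?_
    have h0 : WeakDual.toStrongDual (u n) = NormedSpace.inclusionInDoubleDual ℝ B (z n) := rfl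
    rw [h0]
    exact (NormedSpace.double_dual_bound ℝ B (z n)).trans (hz n)
  obtain ⟨F, hFmem, hF⟩ :=
    (WeakDual.isCompact_closedBall (𝕜 := ℝ) (0 : StrongDual ℝ (StrongDual ℝ B)) M).exists_mapClusterPt hub
  obtain ⟨y, hy⟩ := hsurj (WeakDual.toStrongDual F)
  refine ⟨y, fun g => ?_⟩
  have hcl : MapClusterPt (F g) atTop (fun n => u n g) :=
    hF.continuousAt_comp (WeakDual.eval_continuous g).continuousAt
  have h1 : g y = F g := by
    have h2 : NormedSpace.inclusionInDoubleDual ℝ B y g = g y := NormedSpace.dual_def ℝ B y g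
    rw [← h2, hy]; rfl
  have h3 : (fun n => u n g) = fun n => g (z n) := rfl
  rw [h1, ← h3]
  exact hcl

lemma bc_of_surj (hx : IsSchauderBasis' x)
    (hsurj : Function.Surjective (NormedSpace.inclusionInDoubleDual ℝ B)) :
    BoundedlyComplete' x := by
  obtain ⟨K, hK1, hK⟩ := exists_basisConst hx
  rintro a ⟨M, hM⟩
  have hM' : ∀ n, ‖pS x a n‖ ≤ M := fun n => hM n
  obtain ⟨y, hy⟩ := exists_weak_cluster hsurj (fun n => pS x a n) hM'
  have hco : ∀ i, coeffFn hx y i = a i := by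
    intro i
    have hcl := hy (fCo hx hK i)
    have htend : Tendsto (fun n => fCo hx hK i (pS x a n)) atTop (nhds (a i)) := by
      refine Tendsto.congr' ?_ tendsto_const_nhds
      exact eventually_atTop.2 ⟨i + 1, fun n hn =>
        (fCo_pS hx hK a (lt_of_lt_of_le (Nat.lt_succ_self i) hn)).symm⟩
    exact mapClusterPt_eq hcl htend
  have hfn : pS x a = pS x (coeffFn hx y) := by
    funext N
    unfold pS
    exact Finset.sum_congr rfl fun i _ => by rw [hco i]
  refine ⟨y, ?_⟩
  have h5 := coeff_tendsto hx y
  rw [← hfn] at h5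
  exact h5

lemma shrinking_of_surj (hx : IsSchauderBasis' x)
    (hsurj : Function.Surjective (NormedSpace.inclusionInDoubleDual ℝ B)) :
    Shrinking' x := by
  obtain ⟨K, hK1, hK⟩ := exists_basisConst hx
  by_contra hns
  unfold Shrinking' at hns
  push_neg at hns
  obtain ⟨f, ε, hε, hbad⟩ := hns
  choose n hn v hvmem hvnorm hvf using hbad
  obtain ⟨y, hy⟩ := exists_weak_cluster hsurj v (M := 1) hvnorm
  have hy0 : y = 0 := by
    refine eq_zero_of_coeff_eq_zero hx fun i => ?_
    have hcl := hy (fCo hx hK i)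
    have htend : Tendsto (fun N => fCo hx hK i (v N)) atTop (nhds 0) := by
      refine Tendsto.congr' ?_ tendsto_const_nhds
      refine eventually_atTop.2 ⟨i + 1, fun N hN => ?_⟩
      have hiN : i < n N := lt_of_lt_of_le (lt_of_lt_of_le (Nat.lt_succ_self i) hN) (hn N)
      exact (fCo_eq_zero_of_mem_tail hx hK hiN (hvmem N)).symm
    exact mapClusterPt_eq hcl htend
  have hcl := hy f
  have hclosed : IsClosed {t : ℝ | ε ≤ |t|} := isClosed_le continuous_const continuous_abs
  have hmem : ε ≤ |f y| :=
    mapClusterPt_mem_closed (s := {t : ℝ | ε ≤ |t|}) hclosed hcl fun N => (hvf N).le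
  rw [hy0] at hmem
  simp only [map_zero, abs_zero] at hmem
  linarith

end main2

end

/-- A Banach space with a Schauder basis is reflexive iff the basis is both boundedly
complete and shrinking. -/
theorem reflexive_iff_boundedlyComplete_and_shrinking {B : Type*} [NormedAddCommGroup B]
    [NormedSpace ℝ B] [CompleteSpace B] (x : ℕ → B) (hx : IsSchauderBasis x) :
    Function.Surjective (NormedSpace.inclusionInDoubleDual ℝ B) ↔
      (BoundedlyComplete x ∧ Shrinking x) := by
  have hx' : IsSchauderBasis' x := hx
  constructor
  · intro hsurj
    exact ⟨bc_of_surj hx' hsurj, shrinking_of_surj hx' hsurj⟩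
  · rintro ⟨hbc, hs⟩
    exact surj_of_bc_shrinking hx' hbc hs
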